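/- Let r > 0 and define φ(r) = 2·(exp(-r²)/(r√π) + erf(r) - 1)^{-1} + 1, where erf(r) = (2/√π)∫₀^r e^{-t²} dt. Then φ is strictly increasing on (0, ∞), and for a Gaussian density k with mean a > 0 and variance σ₁ (so r = a/√(2σ₁)), one has ∫_{x>0} k(x)·x dx / ∫_{x<0} k(x)·|x| dx = φ(r). -/

import Mathlib

open Real Set MeasureTheory Filter Topology

lemma auxJ (s : ℝ) : ∫ t in Ioi s, t * Real.exp (-t ^ 2) = Real.exp (-s ^ 2) / 2 := by
  have hint : Integrable (fun t : ℝ => t * Real.exp (-t ^ 2)) := by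
    have := integrable_mul_exp_neg_mul_sq (b := 1) one_pos
    simpa using this
  have hderiv : ∀ x ∈ Ici s, HasDerivAt (fun t : ℝ => -Real.exp (-t ^ 2) / 2)
      (x * Real.exp (-x ^ 2)) x := by
    intro x _
    have h1 : HasDerivAt (fun t : ℝ => -t ^ 2) (-(2 * x)) x := by
      simpa [Pi.neg_def] using ((hasDerivAt_pow 2 x).neg)
    have h2 := (h1.exp).neg.div_const 2
    refine h2.congr_deriv ?_
    ring
  have hlim : Tendsto (fun t : ℝ => -Real.exp (-t ^ 2) / 2) atTop (𝓝 0) := by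
    have h1 : Tendsto (fun t : ℝ => -t ^ 2) atTop atBot := by
      exact tendsto_neg_atBot_iff.mpr (tendsto_pow_atTop two_ne_zero)
    have := (Real.tendsto_exp_atBot.comp h1).neg.div_const 2
    simpa using this
  have := integral_Ioi_of_hasDerivAt_of_tendsto' hderiv hint.integrableOn hlim
  rw [this]; ring

lemma auxIint : Integrable (fun t : ℝ => Real.exp (-t ^ 2)) := by
  have := integrable_exp_neg_mul_sq (b := 1) one_pos
  simpa using this

lemma auxI0 : ∫ t in Ioi (0:ℝ), Real.exp (-t ^ 2) = Real.sqrt Real.pi / 2 := by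
  have := integral_gaussian_Ioi 1
  simpa using this

lemma auxIsplit (r : ℝ) (hr : 0 ≤ r) : ∫ t in Ioi r, Real.exp (-t ^ 2) =
    Real.sqrt Real.pi / 2 - ∫ t in (0:ℝ)..r, Real.exp (-t ^ 2) := by
  have hsplit : (∫ t in Ioc (0:ℝ) r, Real.exp (-t ^ 2)) + ∫ t in Ioi r, Real.exp (-t ^ 2)
      = ∫ t in Ioi (0:ℝ), Real.exp (-t ^ 2) := by
    rw [← setIntegral_union (Ioc_disjoint_Ioi le_rfl) measurableSet_Ioi
      auxIint.integrableOn auxIint.integrableOn, Ioc_union_Ioi_eq_Ioi hr]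
  rw [intervalIntegral.integral_of_le hr, auxI0] at *
  linarith [hsplit]

lemma auxIneg (r : ℝ) : ∫ t in Ioi (-r), Real.exp (-t ^ 2) =
    Real.sqrt Real.pi - ∫ t in Ioi r, Real.exp (-t ^ 2) := by
  have htot : (∫ t in Iic (-r), Real.exp (-t ^ 2)) + ∫ t in Ioi (-r), Real.exp (-t ^ 2)
      = ∫ t : ℝ, Real.exp (-t ^ 2) :=
    intervalIntegral.integral_Iic_add_Ioi auxIint.integrableOn auxIint.integrableOn
  have hall : ∫ t : ℝ, Real.exp (-t ^ 2) = Real.sqrt Real.pi := by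
    have := integral_gaussian 1
    simpa using this
  have hsym : ∫ t in Iic (-r), Real.exp (-t ^ 2) = ∫ t in Ioi r, Real.exp (-t ^ 2) := by
    have := integral_comp_neg_Iic (-r) (fun t => Real.exp (-t ^ 2))
    simp only [neg_neg] at this
    rw [← this]
    congr 1; ext x; rw [neg_pow]; norm_num
  rw [hall, hsym] at htot
  linarith

lemma auxAddIoi (g : ℝ → ℝ) (a d : ℝ) :
    (∫ x in Ioi a, g (x + d)) = ∫ x in Ioi (a + d), g x := by
  rw [← integral_indicator measurableSet_Ioi, ← integral_indicator measurableSet_Ioi,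
    ← integral_add_right_eq_self (fun x => indicator (Ioi (a + d)) g x) d]
  congr 1; ext x
  by_cases h : x ∈ Ioi a
  · rw [indicator_of_mem h, indicator_of_mem (by simpa using add_lt_add_right h.out d)]
  · rw [indicator_of_notMem h, indicator_of_notMem (by
      simp only [mem_Ioi, not_lt] at h ⊢; exact add_le_add_left h d)]

noncomputable def myerf (r : ℝ) : ℝ := 2 / Real.sqrt Real.pi * ∫ t in (0:ℝ)..r, Real.exp (-t ^ 2)

noncomputable def gfun (r : ℝ) : ℝ :=
  Real.exp (-r ^ 2) / (r * Real.sqrt Real.pi) + myerf r - 1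

lemma gfun_hasDeriv {r : ℝ} (hr : 0 < r) :
    HasDerivAt gfun (-(Real.exp (-r ^ 2) / (r ^ 2 * Real.sqrt Real.pi))) r := by
  have hπ : (0:ℝ) < Real.sqrt Real.pi := Real.sqrt_pos.mpr Real.pi_pos
  have h1 : HasDerivAt (fun t : ℝ => Real.exp (-t ^ 2)) (Real.exp (-r ^ 2) * (-(2 * r))) r := by
    have := ((hasDerivAt_pow 2 r).neg).exp
    simpa using this
  have h2 : HasDerivAt (fun t : ℝ => t * Real.sqrt Real.pi) (Real.sqrt Real.pi) r := by
    simpa using (hasDerivAt_id r).mul_const (Real.sqrt Real.pi)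
  have hne : r * Real.sqrt Real.pi ≠ 0 := by positivity
  have h3 := h1.div h2 hne
  have h4 : HasDerivAt (fun t : ℝ => ∫ u in (0:ℝ)..t, Real.exp (-u ^ 2)) (Real.exp (-r ^ 2)) r := by
    have hc : Continuous fun u : ℝ => Real.exp (-u ^ 2) := by continuity
    exact intervalIntegral.integral_hasDerivAt_right (hc.intervalIntegrable _ _)
      hc.aestronglyMeasurable.stronglyMeasurableAtFilter hc.continuousAt
  have h5 := h4.const_mul (2 / Real.sqrt Real.pi)
  have h6 := (h3.add h5).sub_const 1
  have heq : gfun = fun t => Real.exp (-t ^ 2) / (t * Real.sqrt Real.pi) +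
      2 / Real.sqrt Real.pi * (∫ u in (0:ℝ)..t, Real.exp (-u ^ 2)) - 1 := by
    funext t; simp only [gfun, myerf]
  rw [heq]
  refine h6.congr_deriv ?_
  symm
  rw [mul_pow, Real.sq_sqrt Real.pi_pos.le,
    show Real.pi = Real.sqrt Real.pi * Real.sqrt Real.pi from
      (Real.mul_self_sqrt Real.pi_pos.le).symm]
  field_simp
  linear_combination (2 * r ^ 2 + 1) * Real.sq_sqrt (sq_nonneg (Real.sqrt Real.pi))

lemma gfun_anti : StrictAntiOn gfun (Ioi 0) := by
  refine strictAntiOn_of_deriv_neg (convex_Ioi 0) ?_ ?_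
  · intro x hx
    exact ((gfun_hasDeriv hx).continuousAt).continuousWithinAt
  · intro x hx
    rw [interior_Ioi] at hx
    rw [(gfun_hasDeriv hx).deriv]
    have : 0 < Real.exp (-x ^ 2) / (x ^ 2 * Real.sqrt Real.pi) := by
      apply div_pos (Real.exp_pos _)
      exact mul_pos (pow_pos hx 2) (Real.sqrt_pos.mpr Real.pi_pos)
    linarith

lemma gfun_tendsto : Tendsto gfun atTop (𝓝 0) := by
  have hπ : (0:ℝ) < Real.sqrt Real.pi := Real.sqrt_pos.mpr Real.pi_pos
  have h1 : Tendsto (fun r : ℝ => Real.exp (-r ^ 2) / (r * Real.sqrt Real.pi)) atTop (𝓝 0) := by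
    have ha : Tendsto (fun r : ℝ => Real.exp (-r ^ 2)) atTop (𝓝 0) := by
      have := Real.tendsto_exp_atBot.comp
        (tendsto_neg_atBot_iff.mpr (tendsto_pow_atTop two_ne_zero))
      simpa [Function.comp] using this
    have hb : Tendsto (fun r : ℝ => (r * Real.sqrt Real.pi)⁻¹) atTop (𝓝 0) := by
      exact tendsto_inv_atTop_zero.comp (Tendsto.atTop_mul_const hπ tendsto_id)
    have := ha.mul hb
    simpa [div_eq_mul_inv] using this
  have h2 : Tendsto myerf atTop (𝓝 1) := by
    have ht : Tendsto (fun r : ℝ => ∫ t in (0:ℝ)..r, Real.exp (-t ^ 2)) atTop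
        (𝓝 (Real.sqrt Real.pi / 2)) := by
      have := intervalIntegral_tendsto_integral_Ioi 0 auxIint.integrableOn tendsto_id
      rwa [auxI0] at this
    have := ht.const_mul (2 / Real.sqrt Real.pi)
    have heq : 2 / Real.sqrt Real.pi * (Real.sqrt Real.pi / 2) = 1 := by
      field_simp
    rw [heq] at this
    exact this.congr (fun r => rfl)
  have := (h1.add h2).sub_const 1
  simp at this
  exact this

lemma gfun_pos {r : ℝ} (hr : 0 < r) : 0 < gfun r := by
  by_contra h
  push_neg at h
  have h1 : gfun (r + 1) < gfun r := gfun_anti hr (by linarith : (0:ℝ) < r + 1) (by linarith)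
  have h2 : (0:ℝ) ≤ gfun (r + 1) := by
    refine le_of_tendsto gfun_tendsto ?_
    filter_upwards [eventually_ge_atTop (r + 1)] with x hx
    rcases eq_or_lt_of_le hx with rfl | hlt
    · exact le_rfl
    · exact (gfun_anti (mem_Ioi.mpr (by linarith)) (mem_Ioi.mpr (by linarith)) hlt).le
  linarith

lemma keyIoi (c s b ρ : ℝ) :
    ∫ t in Ioi ρ, c * Real.exp (-t ^ 2) * (t * s + b) =
      c * s * (Real.exp (-ρ ^ 2) / 2) + c * b * ∫ t in Ioi ρ, Real.exp (-t ^ 2) := by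
  have hJ : Integrable (fun t : ℝ => t * Real.exp (-t ^ 2)) := by
    simpa using integrable_mul_exp_neg_mul_sq (b := 1) one_pos
  have h1 : IntegrableOn (fun t : ℝ => c * s * (t * Real.exp (-t ^ 2))) (Ioi ρ) :=
    (hJ.const_mul _).integrableOn
  have h2 : IntegrableOn (fun t : ℝ => c * b * Real.exp (-t ^ 2)) (Ioi ρ) :=
    (auxIint.const_mul _).integrableOn
  rw [show (fun t : ℝ => c * Real.exp (-t ^ 2) * (t * s + b)) = fun t =>
    c * s * (t * Real.exp (-t ^ 2)) + c * b * Real.exp (-t ^ 2) from funext (by intro t; ring)]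
  rw [integral_add h1 h2, integral_const_mul, integral_const_mul, auxJ]

example : True := trivial

lemma rpow_half (σ₁ : ℝ) (hσ₁ : 0 < σ₁) : (2 * Real.pi * σ₁) ^ (-(1:ℝ)/2) =
    (Real.sqrt Real.pi * Real.sqrt (2 * σ₁))⁻¹ := by
  have h : (0:ℝ) ≤ 2 * Real.pi * σ₁ := by positivity
  rw [show (-(1:ℝ)/2) = -(1/2 : ℝ) by norm_num, Real.rpow_neg h, ← Real.sqrt_eq_rpow,
    show 2 * Real.pi * σ₁ = Real.pi * (2 * σ₁) by ring, Real.sqrt_mul Real.pi_pos.le]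

lemma intM2 (a σ₁ : ℝ) (ha : 0 < a) (hσ₁ : 0 < σ₁) :
    (∫ x in Iio (0:ℝ),
      ((2 * Real.pi * σ₁) ^ (-(1:ℝ)/2) * Real.exp (-(x - a) ^ 2 / (2 * σ₁))) * |x|)
      = a / 2 * gfun (a / Real.sqrt (2 * σ₁)) := by
  set s : ℝ := Real.sqrt (2 * σ₁) with hs_def
  have hs : 0 < s := Real.sqrt_pos.mpr (by positivity)
  have hs2 : s ^ 2 = 2 * σ₁ := Real.sq_sqrt (by positivity)
  set r : ℝ := a / s with hr_def
  have hr : 0 < r := div_pos ha hs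
  have hrs : r * s = a := div_mul_cancel₀ a hs.ne'
  set c : ℝ := (2 * Real.pi * σ₁) ^ (-(1:ℝ)/2) with hc_def
  have hc : c = (Real.sqrt Real.pi * s)⁻¹ := rpow_half σ₁ hσ₁
  have hπ : (0:ℝ) < Real.sqrt Real.pi := Real.sqrt_pos.mpr Real.pi_pos
  set H : ℝ → ℝ := fun t => c * Real.exp (-t ^ 2) * (t * s + -a) with hH_def
  have step2 : (∫ x in Iio (0:ℝ), (c * Real.exp (-(x - a) ^ 2 / (2 * σ₁))) * |x|)
      = ∫ x in Ioi (0:ℝ), (c * Real.exp (-(-x - a) ^ 2 / (2 * σ₁))) * |(-x)| := by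
    rw [← integral_Iic_eq_integral_Iio]
    have := integral_comp_neg_Ioi (0:ℝ)
      (fun y => (c * Real.exp (-(y - a) ^ 2 / (2 * σ₁))) * |y|)
    rw [neg_zero] at this
    rw [this]
  have step3 : (∫ x in Ioi (0:ℝ), (c * Real.exp (-(-x - a) ^ 2 / (2 * σ₁))) * |(-x)|)
      = ∫ x in Ioi (0:ℝ), H ((x + a) * s⁻¹) := by
    refine setIntegral_congr_fun measurableSet_Ioi (fun x hx => ?_)
    have hx0 : 0 < x := hx
    have h1 : |(-x)| = x := by rw [abs_neg, abs_of_pos hx0]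
    have h2 : ((x + a) * s⁻¹) ^ 2 = (-x - a) ^ 2 / (2 * σ₁) := by
      rw [mul_pow, ← hs2]
      field_simp
      ring
    have h3 : ((x + a) * s⁻¹) * s + -a = x := by
      field_simp
      ring
    rw [hH_def]
    simp only
    rw [h1, h2, h3, neg_div]
  have step4 : (∫ x in Ioi (0:ℝ), H ((x + a) * s⁻¹)) = ∫ x in Ioi a, H (x * s⁻¹) := by
    have := auxAddIoi (fun y => H (y * s⁻¹)) 0 a
    simp only [zero_add] at this
    exact this
  have step5 : (∫ x in Ioi a, H (x * s⁻¹)) = s * ∫ t in Ioi r, H t := by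
    rw [integral_comp_mul_right_Ioi H a (inv_pos.mpr hs), inv_inv, smul_eq_mul,
      ← div_eq_mul_inv, ← hr_def]
  have step6 : (∫ t in Ioi r, H t) = c * s * (Real.exp (-r ^ 2) / 2) +
      c * (-a) * (Real.sqrt Real.pi / 2 - ∫ t in (0:ℝ)..r, Real.exp (-t ^ 2)) := by
    rw [hH_def, keyIoi c s (-a) r, auxIsplit r hr.le]
  rw [step2, step3, step4, step5, step6]
  rw [gfun, myerf, hc, ← hrs]
  have hE := Real.exp_pos (-r ^ 2)
  field_simp
  ring

lemma intM1 (a σ₁ : ℝ) (ha : 0 < a) (hσ₁ : 0 < σ₁) :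
    (∫ x in Ioi (0:ℝ),
      ((2 * Real.pi * σ₁) ^ (-(1:ℝ)/2) * Real.exp (-(x - a) ^ 2 / (2 * σ₁))) * x)
      = a / 2 * (gfun (a / Real.sqrt (2 * σ₁)) + 2) := by
  set s : ℝ := Real.sqrt (2 * σ₁) with hs_def
  have hs : 0 < s := Real.sqrt_pos.mpr (by positivity)
  have hs2 : s ^ 2 = 2 * σ₁ := Real.sq_sqrt (by positivity)
  set r : ℝ := a / s with hr_def
  have hr : 0 < r := div_pos ha hs
  have hrs : r * s = a := div_mul_cancel₀ a hs.ne'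
  set c : ℝ := (2 * Real.pi * σ₁) ^ (-(1:ℝ)/2) with hc_def
  have hc : c = (Real.sqrt Real.pi * s)⁻¹ := rpow_half σ₁ hσ₁
  have hπ : (0:ℝ) < Real.sqrt Real.pi := Real.sqrt_pos.mpr Real.pi_pos
  set H : ℝ → ℝ := fun t => c * Real.exp (-t ^ 2) * (t * s + a) with hH_def
  have step3 : (∫ x in Ioi (0:ℝ), (c * Real.exp (-(x - a) ^ 2 / (2 * σ₁))) * x)
      = ∫ x in Ioi (0:ℝ), H ((x + -a) * s⁻¹) := by
    refine setIntegral_congr_fun measurableSet_Ioi (fun x hx => ?_)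
    have h2 : ((x + -a) * s⁻¹) ^ 2 = (x - a) ^ 2 / (2 * σ₁) := by
      rw [mul_pow, ← hs2]
      field_simp
      ring
    have h3 : ((x + -a) * s⁻¹) * s + a = x := by
      field_simp
      ring
    rw [hH_def]
    simp only
    rw [h2, h3, neg_div]
  have step4 : (∫ x in Ioi (0:ℝ), H ((x + -a) * s⁻¹)) = ∫ x in Ioi (-a), H (x * s⁻¹) := by
    have := auxAddIoi (fun y => H (y * s⁻¹)) 0 (-a)
    simp only [zero_add] at this
    exact this
  have step5 : (∫ x in Ioi (-a), H (x * s⁻¹)) = s * ∫ t in Ioi (-r), H t := by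
    rw [integral_comp_mul_right_Ioi H (-a) (inv_pos.mpr hs), inv_inv, smul_eq_mul,
      show -a * s⁻¹ = -r by rw [hr_def]; field_simp]
  have step6 : (∫ t in Ioi (-r), H t) = c * s * (Real.exp (-r ^ 2) / 2) +
      c * a * (Real.sqrt Real.pi / 2 + ∫ t in (0:ℝ)..r, Real.exp (-t ^ 2)) := by
    rw [hH_def, keyIoi c s a (-r), auxIneg r, auxIsplit r hr.le, neg_sq]
    ring
  rw [step3, step4, step5, step6]
  rw [gfun, myerf, hc, ← hrs]
  have hE := Real.exp_pos (-r ^ 2)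
  field_simp
  ring

theorem stmt19 (a σ₁ : ℝ) (ha : 0 < a) (hσ₁ : 0 < σ₁)
    (erf : ℝ → ℝ)
    (herf : ∀ r, erf r = 2 / Real.sqrt Real.pi * ∫ t in (0:ℝ)..r, Real.exp (-t ^ 2))
    (φ : ℝ → ℝ)
    (hφ : ∀ r, φ r = 2 * (Real.exp (-r ^ 2) / (r * Real.sqrt Real.pi) + erf r - 1)⁻¹ + 1)
    (k : ℝ → ℝ)
    (hk : ∀ x, k x = (2 * Real.pi * σ₁) ^ (-(1:ℝ)/2) *
      Real.exp (-(x - a) ^ 2 / (2 * σ₁))) :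
    StrictMonoOn φ (Set.Ioi 0) ∧
    (∫ x in Set.Ioi (0:ℝ), k x * x) / (∫ x in Set.Iio (0:ℝ), k x * |x|) =
      φ (a / Real.sqrt (2 * σ₁)) := by
  have hφg : ∀ r, φ r = 2 * (gfun r)⁻¹ + 1 := by
    intro r
    rw [hφ, herf, gfun, myerf]
  constructor
  · intro x hx y hy hxy
    rw [hφg, hφg]
    have h1 : gfun y < gfun x := gfun_anti hx hy hxy
    have h2 : 0 < gfun y := gfun_pos hy
    have h3 : (gfun x)⁻¹ < (gfun y)⁻¹ := by
      apply inv_strictAnti₀ h2 h1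
    linarith
  · set r : ℝ := a / Real.sqrt (2 * σ₁) with hr_def
    have hr : 0 < r := div_pos ha (Real.sqrt_pos.mpr (by positivity))
    have hg : 0 < gfun r := gfun_pos hr
    have e1 : (∫ x in Set.Ioi (0:ℝ), k x * x) = a / 2 * (gfun r + 2) := by
      rw [show (fun x => k x * x) = fun x => ((2 * Real.pi * σ₁) ^ (-(1:ℝ)/2) *
        Real.exp (-(x - a) ^ 2 / (2 * σ₁))) * x from funext fun x => by rw [hk]]
      exact intM1 a σ₁ ha hσ₁
    have e2 : (∫ x in Set.Iio (0:ℝ), k x * |x|) = a / 2 * gfun r := by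
      rw [show (fun x => k x * |x|) = fun x => ((2 * Real.pi * σ₁) ^ (-(1:ℝ)/2) *
        Real.exp (-(x - a) ^ 2 / (2 * σ₁))) * |x| from funext fun x => by rw [hk]]
      exact intM2 a σ₁ ha hσ₁
    rw [e1, e2, hφg]
    field_simp
    ring
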